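/- Let X be a finite-dimensional real normed space and x, y ∈ X with x ≠ 0. Then there exists a scalar k ∈ ℝ such that (kx + y) ⊥_B x. -/

import Mathlib

def BJOrth {X : Type*} [NormedAddCommGroup X] [NormedSpace ℝ X] (x y : X) : Prop :=
  ∀ lam : ℝ, ‖x + lam • y‖ ≥ ‖x‖

theorem exists_orthogonal_combination {X : Type*} [NormedAddCommGroup X]
    [NormedSpace ℝ X] [FiniteDimensional ℝ X] (x y : X) (hx : x ≠ 0) :
    ∃ k : ℝ, BJOrth (k • x + y) x := by
  set f : ℝ → ℝ := fun k => ‖k • x + y‖ with hf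
  have hcont : Continuous f := by
    continuity
  have hnx : (0:ℝ) < ‖x‖ := norm_pos_iff.mpr hx
  have hcoer : Filter.Tendsto f (Filter.cocompact ℝ) Filter.atTop := by
    have h1 : Filter.Tendsto (fun k : ℝ => |k| * ‖x‖ - ‖y‖) (Filter.cocompact ℝ)
        Filter.atTop := by
      have := tendsto_norm_cocompact_atTop (E := ℝ)
      simpa [sub_eq_add_neg] using (Filter.tendsto_atTop_add_const_right _ (-‖y‖)
        (this.atTop_mul_const hnx))
    refine Filter.tendsto_atTop_mono (fun k => ?_) h1
    have : ‖k • x‖ ≤ ‖k • x + y‖ + ‖y‖ := by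
      have := norm_add_le (k • x + y) (-y)
      simpa using this
    have hk : ‖k • x‖ = |k| * ‖x‖ := by simp [norm_smul]
    simp only [hf]
    linarith
  obtain ⟨k, hk⟩ := hcont.exists_forall_le hcoer
  refine ⟨k, fun lam => ?_⟩
  have h := hk (k + lam)
  have heq : (k + lam) • x + y = (k • x + y) + lam • x := by
    rw [add_smul]; abel
  simpa [f, heq] using h
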